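/- Let κ > 0 and r̄ ∈ ℝⁿ. The vector x_MV = (1/(2κ))(Σ⁻¹ − Σ⁻¹e eᵀΣ⁻¹/β) r̄ + x_MIN is the unique minimizer of the function x ↦ κ xᵀΣx − r̄ᵀx over C, and the minimum value equals (2κ − eᵀΣ⁻¹r̄)²/(4κ β) − (r̄ᵀΣ⁻¹r̄)/(4κ). -/

import Mathlib

open Matrix

/-- for `κ > 0`,
`x_MV = (1/(2κ))(Σ⁻¹ − Σ⁻¹e eᵀΣ⁻¹/β) r̄ + x_MIN` is the unique minimizer of
`x ↦ κ xᵀΣx − r̄ᵀx` over `C = {x : eᵀx = 1}`, with minimum value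
`(2κ − eᵀΣ⁻¹r̄)²/(4κβ) − r̄ᵀΣ⁻¹r̄/(4κ)`. -/
theorem stmt2 (n : ℕ) (hn : 1 ≤ n) (A : Matrix (Fin n) (Fin n) ℝ)
    (hA : A.PosDef) (hAs : A.IsSymm)
    (e : Fin n → ℝ) (he : e = fun _ => 1)
    (β : ℝ) (hβ : β = e ⬝ᵥ A⁻¹ *ᵥ e)
    (xMIN : Fin n → ℝ) (hxMIN : xMIN = β⁻¹ • (A⁻¹ *ᵥ e))
    (κ : ℝ) (hκ : 0 < κ) (rbar : Fin n → ℝ)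
    (xMV : Fin n → ℝ)
    (hxMV : xMV = (1 / (2 * κ)) •
        ((A⁻¹ - β⁻¹ • vecMulVec (A⁻¹ *ᵥ e) (e ᵥ* A⁻¹)) *ᵥ rbar) + xMIN) :
    e ⬝ᵥ xMV = 1 ∧
    (∀ y : Fin n → ℝ, e ⬝ᵥ y = 1 → y ≠ xMV →
      κ * (xMV ⬝ᵥ A *ᵥ xMV) - rbar ⬝ᵥ xMV < κ * (y ⬝ᵥ A *ᵥ y) - rbar ⬝ᵥ y) ∧
    κ * (xMV ⬝ᵥ A *ᵥ xMV) - rbar ⬝ᵥ xMV =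
      (2 * κ - e ⬝ᵥ A⁻¹ *ᵥ rbar) ^ 2 / (4 * κ * β) - (rbar ⬝ᵥ A⁻¹ *ᵥ rbar) / (4 * κ) := by
  have hdet : IsUnit A.det := hA.det_pos.ne'.isUnit
  have hAinv : A * A⁻¹ = 1 := Matrix.mul_nonsing_inv A hdet
  have hinvsymm : (A⁻¹)ᵀ = A⁻¹ := by
    rw [Matrix.transpose_nonsing_inv, hAs.eq]
  have hsymm : Aᵀ = A := hAs.eq
  -- basic dotProduct symmetry for A⁻¹
  have hdp : ∀ u v : Fin n → ℝ, u ⬝ᵥ A⁻¹ *ᵥ v = v ⬝ᵥ A⁻¹ *ᵥ u := by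
    intro u v
    rw [Matrix.dotProduct_mulVec, ← Matrix.mulVec_transpose, hinvsymm, dotProduct_comm]
  have hvm : e ᵥ* A⁻¹ = A⁻¹ *ᵥ e := by
    rw [← hinvsymm, Matrix.vecMul_transpose, hinvsymm]
  have hAAinv : ∀ v : Fin n → ℝ, A *ᵥ (A⁻¹ *ᵥ v) = v := by
    intro v; rw [Matrix.mulVec_mulVec, hAinv, Matrix.one_mulVec]
  -- e ≠ 0
  have hene : e ≠ 0 := by
    intro h
    have : e ⟨0, hn⟩ = 0 := by rw [h]; rfl
    rw [he] at this; simpa using this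
  have hβpos : 0 < β := by
    rw [hβ]
    simpa using hA.inv.dotProduct_mulVec_pos hene
  have hβ0 : β ≠ 0 := hβpos.ne'
  have hκ0 : (2 : ℝ) * κ ≠ 0 := by positivity
  set c : ℝ := e ⬝ᵥ A⁻¹ *ᵥ rbar with hc
  set R : ℝ := rbar ⬝ᵥ A⁻¹ *ᵥ rbar with hR
  set u : Fin n → ℝ := A⁻¹ *ᵥ rbar with hu
  set w : Fin n → ℝ := A⁻¹ *ᵥ e with hw
  -- simplified form of xMV
  have hcvm : c = (e ᵥ* A⁻¹) ⬝ᵥ rbar := Matrix.dotProduct_mulVec _ _ _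
  have hvv : vecMulVec w (e ᵥ* A⁻¹) *ᵥ rbar = c • w := by
    ext i
    simp only [vecMulVec_apply, Matrix.mulVec, dotProduct, Pi.smul_apply, smul_eq_mul, hcvm,
      Finset.sum_mul]
    exact Finset.sum_congr rfl fun j _ => by ring
  have hx : xMV = (1 / (2 * κ)) • (u - (β⁻¹ * c) • w) + β⁻¹ • w := by
    rw [hxMV, hxMIN, Matrix.sub_mulVec, Matrix.smul_mulVec, hvv, smul_smul]
  have hew : e ⬝ᵥ w = β := by rw [hw, hβ]
  have heu : e ⬝ᵥ u = c := rfl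
  have hru : rbar ⬝ᵥ u = R := rfl
  have hrw : rbar ⬝ᵥ w = c := by rw [hw, hc, hdp]
  -- e ⬝ᵥ xMV = 1
  have h1 : e ⬝ᵥ xMV = 1 := by
    rw [hx]
    simp only [dotProduct_add, dotProduct_smul, dotProduct_sub, heu, hew, smul_eq_mul]
    all_goals field_simp
    ring
  -- A *ᵥ xMV
  have hAx : A *ᵥ xMV = (1 / (2 * κ)) • (rbar - (β⁻¹ * c) • e) + β⁻¹ • e := by
    rw [hx, Matrix.mulVec_add, Matrix.mulVec_smul, Matrix.mulVec_smul, Matrix.mulVec_sub,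
      Matrix.mulVec_smul, hu, hw, hAAinv, hAAinv]
  -- rbar ⬝ᵥ xMV
  have hrx : rbar ⬝ᵥ xMV = (1 / (2 * κ)) * (R - β⁻¹ * c * c) + β⁻¹ * c := by
    rw [hx]
    simp only [dotProduct_add, dotProduct_smul, dotProduct_sub, hru, hrw, smul_eq_mul]
    try ring
  -- xMV ⬝ᵥ A *ᵥ xMV
  have hxAx : xMV ⬝ᵥ A *ᵥ xMV =
      (1 / (2 * κ)) * (rbar ⬝ᵥ xMV - β⁻¹ * c) + β⁻¹ := by
    rw [hAx]
    simp only [dotProduct_add, dotProduct_smul, dotProduct_sub, smul_eq_mul,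
      dotProduct_comm xMV rbar, dotProduct_comm xMV e, h1]
    try ring
  -- value
  have hval : κ * (xMV ⬝ᵥ A *ᵥ xMV) - rbar ⬝ᵥ xMV =
      (2 * κ - c) ^ 2 / (4 * κ * β) - R / (4 * κ) := by
    rw [hxAx, hrx]
    field_simp
    try ring
  refine ⟨h1, ?_, hval⟩
  intro y hy hne
  set d : Fin n → ℝ := y - xMV with hd
  have hdne : d ≠ 0 := sub_ne_zero.mpr hne
  have hed : e ⬝ᵥ d = 0 := by
    rw [hd, dotProduct_sub, hy, h1, sub_self]
  have hdAd : 0 < d ⬝ᵥ A *ᵥ d := by simpa using hA.dotProduct_mulVec_pos hdne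
  -- cross term
  have hde : d ⬝ᵥ e = 0 := by rw [dotProduct_comm]; exact hed
  have hcross : d ⬝ᵥ A *ᵥ xMV = (1 / (2 * κ)) * (rbar ⬝ᵥ d) := by
    rw [hAx]
    simp only [dotProduct_add, dotProduct_smul, dotProduct_sub, smul_eq_mul, hde,
      dotProduct_comm d rbar]
    try ring
  have hxAd : xMV ⬝ᵥ A *ᵥ d = d ⬝ᵥ A *ᵥ xMV := by
    rw [Matrix.dotProduct_mulVec, ← Matrix.mulVec_transpose, hsymm, dotProduct_comm]
  have hyy : y = xMV + d := by rw [hd]; ring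
  have hexp : κ * (y ⬝ᵥ A *ᵥ y) - rbar ⬝ᵥ y =
      (κ * (xMV ⬝ᵥ A *ᵥ xMV) - rbar ⬝ᵥ xMV) + κ * (d ⬝ᵥ A *ᵥ d) := by
    rw [hyy, Matrix.mulVec_add, dotProduct_add, add_dotProduct, add_dotProduct,
      dotProduct_add, hxAd, hcross]
    field_simp
    try ring
  rw [hexp]
  nlinarith
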